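/- Let k be a perfect field of characteristic p > 0 and let V be a k-vector space equipped with a Frobenius-semilinear endomorphism F which is finitely generated over the twisted polynomial ring k_σ[F]. Let T ⊆ V be the set of torsion elements, i.e. those v for which the family (F^n(v))_{n∈ℕ} is k-linearly dependent. Then T is an F-invariant k-subspace of V which is finite-dimensional over k, and there exists an F-invariant k-subspace W with V the internal direct sum of T and W, together with a finite subset B ⊆ W such that the family (F^n(b))_{n∈ℕ, b∈B} is a k-basis of W; that is, V is the direct sum of a torsion module and a free module over k_σ[F]. -/

import Mathlib

open Polynomial

set_option linter.unusedSectionVars false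
set_option maxHeartbeats 800000

section Aux
variable {p : ℕ} [Fact p.Prime] {k : Type*} [Field k] [CharP k p]
  {V : Type*} [AddCommGroup V] [Module k V] (F : V → V)

variable (hFadd : ∀ x y : V, F (x + y) = F x + F y)
  (hFsmul : ∀ (c : k) (v : V), F (c • v) = c ^ p • F v)

section Add
include hFadd

lemma hF0 : F 0 = 0 := by
  have h := hFadd 0 0
  rw [add_zero] at h
  exact (left_eq_add.mp h)

lemma iter_zero (n : ℕ) : F^[n] 0 = 0 := by
  induction n with
  | zero => rfl
  | succ n ih => rw [Function.iterate_succ_apply', ih, hF0 F hFadd]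

lemma iter_add (n : ℕ) (x y : V) : F^[n] (x + y) = F^[n] x + F^[n] y := by
  induction n generalizing x y with
  | zero => rfl
  | succ n ih => rw [Function.iterate_succ_apply', ih, hFadd, Function.iterate_succ_apply',
      Function.iterate_succ_apply']

lemma iter_sum (n : ℕ) {ι : Type*} (s : Finset ι) (f : ι → V) :
    F^[n] (∑ i ∈ s, f i) = ∑ i ∈ s, F^[n] (f i) := by
  classical
  induction s using Finset.induction with
  | empty => simpa using iter_zero F hFadd n
  | insert a s h ih => rw [Finset.sum_insert h, Finset.sum_insert h, iter_add F hFadd, ih]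

end Add

section Smul
include hFsmul

lemma iter_smul (n : ℕ) (c : k) (v : V) : F^[n] (c • v) = c ^ p ^ n • F^[n] v := by
  induction n generalizing v with
  | zero => simp
  | succ n ih =>
      rw [Function.iterate_succ_apply', ih, hFsmul, Function.iterate_succ_apply', ← pow_mul,
        ← pow_succ]

end Smul

/-- Action of a polynomial on `v` through `F`. -/
noncomputable def act (P : k[X]) (v : V) : V := P.sum fun n c => c • F^[n] v

lemma act_zero (v : V) : act F (0 : k[X]) v = 0 := by simp [act]

lemma act_monomial (n : ℕ) (c : k) (v : V) : act F (monomial n c) v = c • F^[n] v := by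
  simp [act, Polynomial.sum_monomial_index]

lemma act_C (c : k) (v : V) : act F (C c) v = c • v := by
  rw [← Polynomial.monomial_zero_left, act_monomial]; rfl

lemma act_add (P Q : k[X]) (v : V) : act F (P + Q) v = act F P v + act F Q v := by
  unfold act
  rw [Polynomial.sum_add_index] <;> simp [add_smul]

lemma act_smul (c : k) (P : k[X]) (v : V) : act F (c • P) v = c • act F P v := by
  unfold act
  rw [Polynomial.sum_smul_index P c (fun n a => a • F^[n] v) (fun i => zero_smul k _),
    Polynomial.smul_sum]
  simp [mul_smul]

lemma act_neg (P : k[X]) (v : V) : act F (-P) v = - act F P v := by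
  have h := act_add F P (-P) v
  rw [add_neg_cancel, act_zero] at h
  exact (neg_eq_of_add_eq_zero_right h.symm).symm

lemma act_sub (P Q : k[X]) (v : V) : act F (P - Q) v = act F P v - act F Q v := by
  rw [sub_eq_add_neg, act_add, act_neg, sub_eq_add_neg]

lemma act_fsum {ι : Type*} (s : Finset ι) (f : ι → k[X]) (v : V) :
    act F (∑ i ∈ s, f i) v = ∑ i ∈ s, act F (f i) v := by
  classical
  induction s using Finset.induction with
  | empty => simp [act_zero]
  | insert a s h ih => rw [Finset.sum_insert h, Finset.sum_insert h, act_add, ih]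

section Right
include hFadd

lemma act_add_right (P : k[X]) (u w : V) :
    act F P (u + w) = act F P u + act F P w := by
  simp only [act, Polynomial.sum_def, iter_add F hFadd, smul_add, Finset.sum_add_distrib]

lemma act_zero_right (P : k[X]) : act F P (0 : V) = 0 := by
  simp only [act, Polynomial.sum_def, iter_zero F hFadd, smul_zero, Finset.sum_const_zero]

lemma act_sum_right {ι : Type*} (P : k[X]) (s : Finset ι) (f : ι → V) :
    act F P (∑ i ∈ s, f i) = ∑ i ∈ s, act F P (f i) := by
  classical
  induction s using Finset.induction with
  | empty => simpa using act_zero_right F hFadd P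
  | insert a s h ih => rw [Finset.sum_insert h, Finset.sum_insert h, act_add_right F hFadd, ih]

end Right

variable (p) [PerfectRing k p]

noncomputable def twMul (A Q : k[X]) : k[X] :=
  A.sum fun i a => Q.sum fun j q => monomial (i + j) (a * q ^ p ^ i)

lemma pthRoot_pow (n : ℕ) (y : k) :
    ((frobeniusEquiv k p).symm)^[n] y ^ p ^ n = y := by
  induction n generalizing y with
  | zero => simp
  | succ n ih =>
      rw [Function.iterate_succ_apply, pow_succ, pow_mul, ih ((frobeniusEquiv k p).symm y)]
      have h : (frobeniusEquiv k p) ((frobeniusEquiv k p).symm y) = y :=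
        (frobeniusEquiv k p).apply_symm_apply y
      rwa [frobeniusEquiv_apply] at h

include hFadd hFsmul in
lemma act_twMul (A Q : k[X]) (v : V) :
    act F (twMul p A Q) v = act F A (act F Q v) := by
  unfold twMul
  rw [Polynomial.sum_def, act_fsum]
  conv_rhs => rw [act, Polynomial.sum_def]
  refine Finset.sum_congr rfl fun i hi => ?_
  rw [Polynomial.sum_def, act_fsum]
  conv_rhs => rw [act, Polynomial.sum_def]
  rw [iter_sum F hFadd, Finset.smul_sum]
  refine Finset.sum_congr rfl fun j hj => ?_
  rw [act_monomial, iter_smul F hFsmul, ← Function.iterate_add_apply, smul_smul]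

lemma twMul_monomial (B : k[X]) (e : ℕ) (x : k) :
    twMul p B (monomial e x) = B.sum fun i b => monomial (i + e) (b * x ^ p ^ i) := by
  unfold twMul
  refine Finset.sum_congr rfl fun i hi => ?_
  dsimp only
  rw [Polynomial.sum_monomial_index]
  rw [zero_pow (pow_ne_zero i (Nat.Prime.ne_zero Fact.out)), mul_zero, monomial_zero_right]

lemma twMul_monomial_coeff (B : k[X]) (e : ℕ) (x : k) :
    (twMul p B (monomial e x)).coeff (B.natDegree + e) =
      B.leadingCoeff * x ^ p ^ B.natDegree := by
  classical
  rw [twMul_monomial, Polynomial.sum_def, Polynomial.finset_sum_coeff]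
  rw [Finset.sum_eq_single B.natDegree]
  · rw [coeff_monomial, if_pos rfl]; rfl
  · intro i _ hne
    rw [coeff_monomial, if_neg (fun h => hne (by omega))]
  · intro h
    have h0 : B.coeff B.natDegree = 0 := Polynomial.notMem_support_iff.mp h
    rw [h0, zero_mul, monomial_zero_right, coeff_zero]

lemma twMul_monomial_degree (B : k[X]) (e : ℕ) (x : k) :
    (twMul p B (monomial e x)).degree ≤ ((B.natDegree + e : ℕ) : WithBot ℕ) := by
  rw [twMul_monomial, Polynomial.sum_def]
  refine (Polynomial.degree_sum_le _ _).trans ?_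
  rw [Finset.sup_le_iff]
  intro i hi
  refine (Polynomial.degree_monomial_le _ _).trans ?_
  have hle := Polynomial.le_natDegree_of_mem_supp i hi
  have h2 : i + e ≤ B.natDegree + e := by omega
  exact_mod_cast h2

include hFadd hFsmul in
lemma div_aux (B : k[X]) (hB : B ≠ 0) :
    ∀ (n : ℕ) (A : k[X]), A.degree < (n : WithBot ℕ) →
      ∃ Q R : k[X], (∀ v : V, act F A v = act F B (act F Q v) + act F R v) ∧
        (R = 0 ∨ R.degree < B.degree) := by
  intro n
  induction n with
  | zero =>
      intro A hA
      have hbot : A.degree = ⊥ := Nat.WithBot.lt_zero_iff.mp (by exact_mod_cast hA)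
      have hA0 : A = 0 := Polynomial.degree_eq_bot.mp hbot
      subst hA0
      exact ⟨0, 0, fun v => by simp [act_zero, act_zero_right F hFadd], Or.inl rfl⟩
  | succ n ih =>
      intro A hA
      by_cases hlt : A.degree < B.degree
      · exact ⟨0, A, fun v => by simp [act_zero, act_zero_right F hFadd], Or.inr hlt⟩
      push_neg at hlt
      have hA0 : A ≠ 0 := by
        intro h; subst h
        rw [Polynomial.degree_zero, le_bot_iff, Polynomial.degree_eq_bot] at hlt
        exact hB hlt
      have hle : B.natDegree ≤ A.natDegree := Polynomial.natDegree_le_natDegree hlt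
      set e := A.natDegree - B.natDegree with he
      set x := ((frobeniusEquiv k p).symm)^[B.natDegree] (A.leadingCoeff / B.leadingCoeff)
        with hxdef
      have hx : B.leadingCoeff * x ^ p ^ B.natDegree = A.leadingCoeff := by
        rw [hxdef, pthRoot_pow, mul_div_cancel₀ _ (Polynomial.leadingCoeff_ne_zero.mpr hB)]
      set M := twMul p B (monomial e x) with hM
      have hde : B.natDegree + e = A.natDegree := by omega
      have hMc : M.coeff A.natDegree = A.leadingCoeff := by
        rw [hM, ← hde, twMul_monomial_coeff, hx]
      have hMne : M ≠ 0 := fun h => Polynomial.leadingCoeff_ne_zero.mpr hA0 (by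
        rw [← hMc, h, coeff_zero])
      have hMdeg : M.degree = A.degree := by
        refine le_antisymm ?_ ?_
        · rw [Polynomial.degree_eq_natDegree hA0]
          have h2 := twMul_monomial_degree p B e x
          rwa [hde] at h2
        · rw [Polynomial.degree_eq_natDegree hA0]
          exact Polynomial.le_degree_of_ne_zero (by
            rw [hMc]; exact Polynomial.leadingCoeff_ne_zero.mpr hA0)
      have hMlc : M.leadingCoeff = A.leadingCoeff := by
        have hnd : M.natDegree = A.natDegree := by
          have h3 := hMdeg
          rw [Polynomial.degree_eq_natDegree hA0, Polynomial.degree_eq_natDegree hMne] at h3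
          exact_mod_cast h3
        show M.coeff M.natDegree = _
        rw [hnd, hMc]
      have hsub : (A - M).degree < A.degree :=
        Polynomial.degree_sub_lt hMdeg.symm hA0 hMlc.symm
      have hstep : (A - M).degree < (n : WithBot ℕ) := by
        refine lt_of_lt_of_le hsub ?_
        rw [Polynomial.degree_eq_natDegree hA0]
        have : A.natDegree < n + 1 := by
          rw [Polynomial.degree_eq_natDegree hA0] at hA
          exact_mod_cast hA
        exact_mod_cast Nat.lt_succ_iff.mp this
      obtain ⟨Q', R', hQR', hR'⟩ := ih (A - M) hstep
      refine ⟨Q' + monomial e x, R', fun v => ?_, hR'⟩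
      have h1 : act F A v = act F (A - M) v + act F M v := by
        rw [act_sub]; abel
      rw [h1, hQR' v, hM, act_twMul p F hFadd hFsmul, act_add, act_add_right F hFadd]
      abel

include hFadd hFsmul in
lemma division (B : k[X]) (hB : B ≠ 0) (A : k[X]) :
    ∃ Q R : k[X], (∀ v : V, act F A v = act F B (act F Q v) + act F R v) ∧
      (R = 0 ∨ R.degree < B.degree) := by
  refine div_aux p F hFadd hFsmul B hB (A.natDegree + 1) A ?_
  calc A.degree ≤ (A.natDegree : WithBot ℕ) := Polynomial.degree_le_natDegree
    _ < ((A.natDegree + 1 : ℕ) : WithBot ℕ) := by exact_mod_cast Nat.lt_succ_self _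

/-! ### Torsion -/
attribute [local instance] Classical.propDecidable

/-- `v` has all its `F`-iterates inside a finite-dimensional subspace. -/
def Tor (v : V) : Prop := ∃ U : Submodule k V, FiniteDimensional k U ∧ ∀ n, F^[n] v ∈ U

include hFadd hFsmul in
lemma F_mem_of_mem_span (U : Submodule k V) (s : Set V) (hs : ∀ x ∈ s, F x ∈ U)
    {x : V} (hx : x ∈ Submodule.span k s) : F x ∈ U := by
  induction hx using Submodule.span_induction with
  | mem y hy => exact hs y hy
  | zero => rw [hF0 F hFadd]; exact U.zero_mem
  | add y z _ _ hy hz => rw [hFadd]; exact U.add_mem hy hz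
  | smul c y _ hy => rw [hFsmul]; exact U.smul_mem _ hy

lemma iter_mem_of_stable (U : Submodule k V) (hU : ∀ x ∈ U, F x ∈ U) {v : V}
    (hv : v ∈ U) : ∀ n, F^[n] v ∈ U := by
  intro n
  induction n with
  | zero => exact hv
  | succ n ih => rw [Function.iterate_succ_apply']; exact hU _ ih

include hFadd hFsmul in
lemma tor_of_iter_mem (d : ℕ) (v : V) (U' : Submodule k V) (hfin : FiniteDimensional k U')
    (hst : ∀ x ∈ U', F x ∈ U')
    (h : F^[d] v ∈ Submodule.span k
        ((Finset.image (fun j => F^[j] v) (Finset.range d) : Finset V) : Set V) ⊔ U') :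
    Tor (k := k) F v := by
  classical
  set U := Submodule.span k
      ((Finset.image (fun j => F^[j] v) (Finset.range d) : Finset V) : Set V) ⊔ U' with hUdef
  have hstab : ∀ x ∈ U, F x ∈ U := by
    intro x hx
    rcases Submodule.mem_sup.mp hx with ⟨a, ha, b, hb, rfl⟩
    rw [hFadd]
    refine U.add_mem ?_ (Submodule.mem_sup_right (hst b hb))
    refine F_mem_of_mem_span p F hFadd hFsmul U _ ?_ ha
    intro y hy
    rcases Finset.mem_image.mp (by exact_mod_cast hy) with ⟨j, hj, rfl⟩
    rw [← Function.iterate_succ_apply' F j v]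
    rcases Nat.lt_or_ge (j + 1) d with hlt | hge
    · exact Submodule.mem_sup_left (Submodule.subset_span (by
        exact_mod_cast Finset.mem_image.mpr ⟨j + 1, Finset.mem_range.mpr hlt, rfl⟩))
    · have hjd : j + 1 = d := by have := Finset.mem_range.mp hj; omega
      rw [Nat.succ_eq_add_one, hjd]; exact h
  have hvU : v ∈ U := by
    cases d with
    | zero => exact h
    | succ d' =>
        exact Submodule.mem_sup_left (Submodule.subset_span (by
          exact_mod_cast Finset.mem_image.mpr ⟨0, Finset.mem_range.mpr (Nat.succ_pos d'), rfl⟩))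
  haveI := hfin
  exact ⟨U, by infer_instance, iter_mem_of_stable F U hstab hvU⟩

include hFadd hFsmul in
lemma tor_iff (v : V) : Tor (k := k) F v ↔ ¬ LinearIndependent k fun n : ℕ => F^[n] v := by
  constructor
  · rintro ⟨U, hfin, hmem⟩ hindep
    set f' : ℕ → U := fun n => ⟨F^[n] v, hmem n⟩ with hf'
    have hcomp : (U.subtype ∘ f') = fun n : ℕ => F^[n] v := rfl
    have hind' : LinearIndependent k f' := LinearIndependent.of_comp U.subtype (by
      rw [hcomp]; exact hindep)
    have h1 : Set.Finite (Set.range f') := @Set.finite_range _ _ f' hind'.finite_of_isNoetherian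
    exact (Set.infinite_range_of_injective hind'.injective) h1
  · intro hnind
    classical
    rw [linearIndependent_iff] at hnind
    push_neg at hnind
    obtain ⟨l, hl0, hlne⟩ := hnind
    have hsupp : l.support.Nonempty := Finsupp.support_nonempty_iff.mpr hlne
    set d := l.support.max' hsupp with hd
    have hdmem : d ∈ l.support := l.support.max'_mem hsupp
    have hcd : l d ≠ 0 := Finsupp.mem_support_iff.mp hdmem
    have htot : (l.sum fun n a => a • F^[n] v) = 0 := by
      rw [← hl0, Finsupp.linearCombination_apply]
    rw [Finsupp.sum, ← Finset.add_sum_erase _ _ hdmem] at htot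
    have h1 : l d • F^[d] v = -∑ n ∈ l.support.erase d, l n • F^[n] v :=
      eq_neg_of_add_eq_zero_left htot
    have hFd : F^[d] v = (l d)⁻¹ • -∑ n ∈ l.support.erase d, l n • F^[n] v := by
      rw [← h1, inv_smul_smul₀ hcd]
    refine tor_of_iter_mem p F hFadd hFsmul d v ⊥ (by infer_instance)
      (fun x hx => by rw [Submodule.mem_bot] at hx; rw [hx, hF0 F hFadd]; exact Submodule.zero_mem _)
      (Submodule.mem_sup_left ?_)
    rw [hFd]
    refine Submodule.smul_mem _ _ (Submodule.neg_mem _ (Submodule.sum_mem _ fun n hn => ?_))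
    refine Submodule.smul_mem _ _ (Submodule.subset_span ?_)
    have hnd : n < d := lt_of_le_of_ne (Finset.le_max' _ _ (Finset.mem_of_mem_erase hn))
      (Finset.ne_of_mem_erase hn)
    exact_mod_cast Finset.mem_image.mpr ⟨n, Finset.mem_range.mpr hnd, rfl⟩

/-- The torsion submodule. -/
noncomputable def TorSub : Submodule k V where
  carrier := {v | Tor (k := k) F v}
  zero_mem' := ⟨⊥, inferInstance, fun n => by
    rw [iter_zero F hFadd]; exact Submodule.zero_mem ⊥⟩
  add_mem' := by
    rintro a b ⟨U1, h1, m1⟩ ⟨U2, h2, m2⟩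
    haveI := h1; haveI := h2
    exact ⟨U1 ⊔ U2, inferInstance, fun n => by
      rw [iter_add F hFadd]
      exact Submodule.add_mem _ (Submodule.mem_sup_left (m1 n)) (Submodule.mem_sup_right (m2 n))⟩
  smul_mem' := by
    rintro c v ⟨U, h, m⟩
    exact ⟨U, h, fun n => by rw [iter_smul F hFsmul]; exact U.smul_mem _ (m n)⟩

lemma mem_TorSub {v : V} : v ∈ TorSub p F hFadd hFsmul ↔ Tor (k := k) F v := Iff.rfl

lemma TorSub_Fstable {v : V} (hv : v ∈ TorSub p F hFadd hFsmul) :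
    F v ∈ TorSub p F hFadd hFsmul := by
  obtain ⟨U, h, m⟩ := hv
  exact ⟨U, h, fun n => by rw [← Function.iterate_succ_apply]; exact m (n + 1)⟩

lemma act_mem_of_stable (U : Submodule k V) (hU : ∀ x ∈ U, F x ∈ U) (P : k[X]) {t : V}
    (ht : t ∈ U) : act F P t ∈ U := by
  refine Submodule.sum_mem _ fun n _ => ?_
  exact U.smul_mem _ (iter_mem_of_stable F U hU ht n)

lemma act_mem_TorSub (P : k[X]) {t : V} (ht : t ∈ TorSub p F hFadd hFsmul) :
    act F P t ∈ TorSub p F hFadd hFsmul :=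
  act_mem_of_stable F _ (fun _ hx => TorSub_Fstable p F hFadd hFsmul hx) P ht

lemma act_mem_span_low (Q : k[X]) (v : V) (d : ℕ) (h : ∀ n ∈ Q.support, n < d) :
    act F Q v ∈ Submodule.span k
      ((Finset.image (fun j => F^[j] v) (Finset.range d) : Finset V) : Set V) := by
  refine Submodule.sum_mem _ fun n hn => ?_
  refine Submodule.smul_mem _ _ (Submodule.subset_span ?_)
  exact_mod_cast Finset.mem_image.mpr ⟨n, Finset.mem_range.mpr (h n hn), rfl⟩

/-- "Torsion-freeness" of `V / TorSub`. -/
lemma mem_TorSub_of_act (P : k[X]) (hP : P ≠ 0) {v : V}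
    (h : act F P v ∈ TorSub p F hFadd hFsmul) : v ∈ TorSub p F hFadd hFsmul := by
  rcases Nat.eq_zero_or_pos P.natDegree with hd | hd
  · have hPC : P = C (P.coeff 0) := Polynomial.eq_C_of_natDegree_eq_zero hd
    have hc : P.coeff 0 ≠ 0 := fun h0 => hP (by rw [hPC, h0, map_zero])
    rw [hPC, act_C] at h
    have := Submodule.smul_mem (TorSub p F hFadd hFsmul) (P.coeff 0)⁻¹ h
    rwa [inv_smul_smul₀ hc] at this
  · set d := P.natDegree with hdd
    set t := act F P v with htdef
    obtain ⟨Ut, hUtfin, hUt⟩ := h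
    haveI := hUtfin
    set U' : Submodule k V := Submodule.span k (Set.range fun n => F^[n] t) with hU'
    have hU'le : U' ≤ Ut := Submodule.span_le.mpr (by rintro x ⟨n, rfl⟩; exact hUt n)
    haveI hU'fin : FiniteDimensional k U' := Submodule.finiteDimensional_of_le hU'le
    have hU'st : ∀ x ∈ U', F x ∈ U' := by
      intro x hx
      refine F_mem_of_mem_span p F hFadd hFsmul U' _ ?_ hx
      rintro y ⟨n, rfl⟩
      rw [← Function.iterate_succ_apply' F n t]
      exact Submodule.subset_span ⟨n + 1, rfl⟩
    have ht : t ∈ U' := Submodule.subset_span ⟨0, rfl⟩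
    have hc : P.leadingCoeff ≠ 0 := Polynomial.leadingCoeff_ne_zero.mpr hP
    have hkey : act F P v = act F P.eraseLead v + P.leadingCoeff • F^[d] v := by
      conv_lhs => rw [← Polynomial.eraseLead_add_monomial_natDegree_leadingCoeff P]
      rw [act_add, act_monomial]
    have hFd : F^[d] v = P.leadingCoeff⁻¹ • (t - act F P.eraseLead v) := by
      rw [htdef, hkey]; rw [add_sub_cancel_left]  -- t - erase = lc • F^d
      rw [inv_smul_smul₀ hc]
    refine tor_of_iter_mem p F hFadd hFsmul d v U' hU'fin hU'st ?_
    rw [hFd]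
    refine Submodule.smul_mem _ _ (Submodule.sub_mem _ (Submodule.mem_sup_right ht)
      (Submodule.mem_sup_left ?_))
    refine act_mem_span_low F P.eraseLead v d fun n hn => ?_
    have h1 := Polynomial.eraseLead_support P ▸ hn
    exact lt_of_le_of_ne (Polynomial.le_natDegree_of_mem_supp n (Finset.mem_of_mem_erase h1))
      (Finset.ne_of_mem_erase h1)

/-! ### Generation and independence -/

/-- Span of all `F`-iterates of a finite tuple. -/
noncomputable def itSpan (m : ℕ) (b : Fin m → V) : Submodule k V :=
  Submodule.span k (Set.range fun ni : ℕ × Fin m => F^[ni.1] (b ni.2))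

/-- `b` generates `V` over `k_σ[F]` together with the torsion part. -/
def Gen (m : ℕ) (b : Fin m → V) : Prop :=
  TorSub p F hFadd hFsmul ⊔ itSpan (k := k) F m b = ⊤

/-- independence over `k_σ[F]` modulo torsion. -/
def Indep (m : ℕ) (b : Fin m → V) : Prop :=
  ∀ P : Fin m → k[X], (∑ i, act F (P i) (b i)) ∈ TorSub p F hFadd hFsmul → P = 0

include hFadd hFsmul in
lemma itSpan_Fstable (m : ℕ) (b : Fin m → V) :
    ∀ x ∈ itSpan (k := k) F m b, F x ∈ itSpan (k := k) F m b := by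
  intro x hx
  refine F_mem_of_mem_span p F hFadd hFsmul _ _ ?_ hx
  rintro y ⟨⟨n, i⟩, rfl⟩
  rw [← Function.iterate_succ_apply' F n (b i)]
  exact Submodule.subset_span ⟨(n + 1, i), rfl⟩

lemma mem_itSpan (m : ℕ) (b : Fin m → V) (A : k[X]) (i : Fin m) :
    act F A (b i) ∈ itSpan (k := k) F m b := by
  refine Submodule.sum_mem _ fun n _ => ?_
  exact Submodule.smul_mem _ _ (Submodule.subset_span ⟨(n, i), rfl⟩)

include hFadd hFsmul in
lemma sup_Fstable (m : ℕ) (b : Fin m → V) :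
    ∀ x ∈ TorSub p F hFadd hFsmul ⊔ itSpan (k := k) F m b,
      F x ∈ TorSub p F hFadd hFsmul ⊔ itSpan (k := k) F m b := by
  intro x hx
  rcases Submodule.mem_sup.mp hx with ⟨a, ha, z, hz, rfl⟩
  rw [hFadd]
  exact Submodule.add_mem _
    (Submodule.mem_sup_left (TorSub_Fstable p F hFadd hFsmul ha))
    (Submodule.mem_sup_right (itSpan_Fstable p F hFadd hFsmul m b z hz))

include hFadd hFsmul in
lemma gen_transfer {m m' : ℕ} (b : Fin m → V) (b' : Fin m' → V)
    (hGen : Gen p F hFadd hFsmul m b)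
    (hb : ∀ i, b i ∈ TorSub p F hFadd hFsmul ⊔ itSpan (k := k) F m' b') :
    Gen p F hFadd hFsmul m' b' := by
  unfold Gen at hGen ⊢
  rw [← top_le_iff, ← hGen]
  refine sup_le (le_sup_left) ?_
  unfold itSpan
  rw [Submodule.span_le]
  rintro y ⟨⟨n, i⟩, rfl⟩
  exact iter_mem_of_stable F _ (sup_Fstable p F hFadd hFsmul m' b') (hb i) n

include hFadd hFsmul in
lemma exists_indep_gen : ∀ (m : ℕ) (b : Fin m → V), Gen p F hFadd hFsmul m b →
    ∃ (m' : ℕ) (b' : Fin m' → V),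
      Gen p F hFadd hFsmul m' b' ∧ Indep p F hFadd hFsmul m' b' := by
  intro m
  induction m using Nat.strong_induction_on with
  | _ m IHm =>
  intro b hGen
  by_cases hI : Indep p F hFadd hFsmul m b
  · exact ⟨m, b, hGen, hI⟩
  unfold Indep at hI
  push_neg at hI
  obtain ⟨P₀, hRel₀, hP₀⟩ := hI
  rcases Nat.eq_zero_or_pos m with hm0 | hmpos
  · subst hm0; exact absurd (_root_.funext fun i => Fin.elim0 i) hP₀
  obtain ⟨n, rfl⟩ : ∃ n, m = n + 1 := ⟨m - 1, by omega⟩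
  -- dropping a generator expressible from the others
  have hdrop : ∀ (b : Fin (n + 1) → V) (i₀ : Fin (n + 1)),
      Gen p F hFadd hFsmul (n + 1) b →
      b i₀ ∈ TorSub p F hFadd hFsmul ⊔ itSpan (k := k) F n (fun j => b (i₀.succAbove j)) →
      ∃ (m' : ℕ) (b' : Fin m' → V),
        Gen p F hFadd hFsmul m' b' ∧ Indep p F hFadd hFsmul m' b' := by
    intro b i₀ hGenb hmem
    refine IHm n (Nat.lt_succ_self n) (fun j => b (i₀.succAbove j))
      (gen_transfer p F hFadd hFsmul b (fun j => b (i₀.succAbove j)) hGenb ?_)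
    intro i
    by_cases hi : i = i₀
    · subst hi; exact hmem
    · obtain ⟨j, rfl⟩ := Fin.exists_succAbove_eq hi
      exact Submodule.mem_sup_right (Submodule.subset_span ⟨(0, j), rfl⟩)
  have Haux : ∀ (D c : ℕ) (P : Fin (n + 1) → k[X]) (b : Fin (n + 1) → V),
      Gen p F hFadd hFsmul (n + 1) b →
      (∑ i, act F (P i) (b i)) ∈ TorSub p F hFadd hFsmul →
      ∀ i₀ : Fin (n + 1), P i₀ ≠ 0 →
      (∀ i, P i ≠ 0 → (P i₀).natDegree ≤ (P i).natDegree) →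
      (P i₀).natDegree ≤ D →
      (Finset.univ.filter fun i => P i ≠ 0).card ≤ c →
      ∃ (m' : ℕ) (b' : Fin m' → V),
        Gen p F hFadd hFsmul m' b' ∧ Indep p F hFadd hFsmul m' b' := by
    intro D
    induction D using Nat.strong_induction_on with
    | _ D IHD =>
    intro c
    induction c using Nat.strong_induction_on with
    | _ c IHc =>
    intro P b hGenb hRel i₀ hi₀ hmin hD hc
    by_cases hd0 : (P i₀).natDegree = 0
    · -- pivot is a nonzero constant: solve for `b i₀` and drop it
      have hPC : P i₀ = C ((P i₀).coeff 0) := Polynomial.eq_C_of_natDegree_eq_zero hd0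
      have hc0 : (P i₀).coeff 0 ≠ 0 := fun h => hi₀ (by rw [hPC, h, map_zero])
      refine hdrop b i₀ hGenb ?_
      have hact : act F (P i₀) (b i₀) = (P i₀).coeff 0 • b i₀ := by
        conv_lhs => rw [hPC]
        rw [act_C]
      have hsplit : (∑ i, act F (P i) (b i)) =
          act F (P i₀) (b i₀) + ∑ i ∈ Finset.univ.erase i₀, act F (P i) (b i) :=
        (Finset.add_sum_erase _ _ (Finset.mem_univ i₀)).symm
      have hbi : b i₀ = ((P i₀).coeff 0)⁻¹ •
          ((∑ i, act F (P i) (b i)) - ∑ i ∈ Finset.univ.erase i₀, act F (P i) (b i)) := by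
        rw [hsplit, add_sub_cancel_right, hact, inv_smul_smul₀ hc0]
      rw [hbi]
      refine Submodule.smul_mem _ _ (Submodule.sub_mem _ (Submodule.mem_sup_left hRel)
        (Submodule.sum_mem _ fun i hi => ?_))
      obtain ⟨j, rfl⟩ := Fin.exists_succAbove_eq (Finset.mem_erase.mp hi).1
      exact Submodule.mem_sup_right
        (mem_itSpan F n (fun j' => b (i₀.succAbove j')) (P (i₀.succAbove j)) j)
    · by_cases hone : ∀ j, j ≠ i₀ → P j = 0
      · -- a one-term relation: `b i₀` is torsion, drop it
        have hsum : (∑ i, act F (P i) (b i)) = act F (P i₀) (b i₀) := by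
          refine Finset.sum_eq_single i₀ (fun i _ hne => by rw [hone i hne, act_zero])
            (fun h => absurd (Finset.mem_univ i₀) h)
        have hbT : b i₀ ∈ TorSub p F hFadd hFsmul :=
          mem_TorSub_of_act p F hFadd hFsmul (P i₀) hi₀ (hsum ▸ hRel)
        exact hdrop b i₀ hGenb (Submodule.mem_sup_left hbT)
      · push_neg at hone
        obtain ⟨j, hji₀, hPj⟩ := hone
        obtain ⟨Q, R, hQR, hR⟩ := division p F hFadd hFsmul (P i₀) hi₀ (P j)
        set b' := Function.update b i₀ (b i₀ + act F Q (b j)) with hb'def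
        set P' := Function.update P j R with hP'def
        have hb'j : b' j = b j := Function.update_of_ne hji₀ _ b
        have hb'i₀ : b' i₀ = b i₀ + act F Q (b j) := Function.update_self _ _ _
        have hP'i₀ : P' i₀ = P i₀ := Function.update_of_ne (Ne.symm hji₀) _ P
        have hP'j : P' j = R := Function.update_self _ _ _
        have hfun : (fun i => act F (P' i) (b' i)) =
            Function.update (Function.update (fun i => act F (P i) (b i)) i₀
              (act F (P i₀) (b i₀ + act F Q (b j)))) j (act F R (b j)) := by
          funext i
          by_cases hij : i = j
          · subst hij
            rw [Function.update_self, hP'j, hb'j]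
          · rw [Function.update_of_ne hij]
            by_cases hii : i = i₀
            · subst hii
              rw [Function.update_self, hP'i₀, hb'i₀]
            · have hPi : P' i = P i := Function.update_of_ne hij R P
              have hbi : b' i = b i := Function.update_of_ne hii _ b
              rw [Function.update_of_ne hii, hPi, hbi]
        have hi₀mem : i₀ ∈ Finset.univ \ {j} := Finset.mem_sdiff.mpr
          ⟨Finset.mem_univ _, fun h => hji₀ (Finset.mem_singleton.mp h).symm⟩
        have heq : (∑ i, act F (P' i) (b' i)) = ∑ i, act F (P i) (b i) := by
          have h1 : (∑ i, act F (P' i) (b' i)) = ∑ i,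
              (Function.update (Function.update (fun i => act F (P i) (b i)) i₀
                (act F (P i₀) (b i₀ + act F Q (b j)))) j (act F R (b j))) i :=
            Finset.sum_congr rfl fun i _ => congrFun hfun i
          rw [h1, Finset.sum_update_of_mem (Finset.mem_univ j),
            Finset.sum_update_of_mem hi₀mem]
          conv_rhs => rw [← Finset.add_sum_erase _ _ (Finset.mem_univ j),
            ← Finset.add_sum_erase _ _ (Finset.mem_erase.mpr
              ⟨fun h => hji₀ h.symm, Finset.mem_univ i₀⟩)]
          have hsets : ((Finset.univ \ {j} : Finset (Fin (n+1))) \ {i₀}) =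
              (Finset.univ.erase j).erase i₀ := by
            rw [Finset.sdiff_singleton_eq_erase, Finset.sdiff_singleton_eq_erase]
          rw [hsets, act_add_right F hFadd, hQR (b j)]
          abel
        have hRel' : (∑ i, act F (P' i) (b' i)) ∈ TorSub p F hFadd hFsmul := by
          rw [heq]; exact hRel
        have hGen' : Gen p F hFadd hFsmul (n + 1) b' := by
          refine gen_transfer p F hFadd hFsmul b b' hGenb ?_
          intro i
          by_cases hii : i = i₀
          · have hbi : b i = b' i - act F Q (b' j) := by
              rw [hii, hb'i₀, hb'j]; abel
            rw [hbi]
            exact Submodule.mem_sup_right (Submodule.sub_mem _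
              (Submodule.subset_span ⟨(0, i), rfl⟩) (mem_itSpan F (n + 1) b' Q j))
          · have hbi : b i = b' i := (Function.update_of_ne hii _ b).symm
            rw [hbi]
            exact Submodule.mem_sup_right (Submodule.subset_span ⟨(0, i), rfl⟩)
        rcases eq_or_ne R 0 with hR0 | hRne
        · -- `R = 0` : the relation has one fewer nonzero coefficient
          have hsub : (Finset.univ.filter fun i => P' i ≠ 0) ⊆
              (Finset.univ.filter fun i => P i ≠ 0).erase j := by
            intro i hi
            have hi2 := (Finset.mem_filter.mp hi).2
            have hij : i ≠ j := fun h => hi2 (by rw [h, hP'j, hR0])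
            refine Finset.mem_erase.mpr ⟨hij, Finset.mem_filter.mpr ⟨Finset.mem_univ _, ?_⟩⟩
            rwa [← Function.update_of_ne hij R P]
          have hjmem : j ∈ (Finset.univ.filter fun i => P i ≠ 0) :=
            Finset.mem_filter.mpr ⟨Finset.mem_univ _, hPj⟩
          have hcard : (Finset.univ.filter fun i => P' i ≠ 0).card ≤ c - 1 := by
            have h1 := Finset.card_le_card hsub
            have h2 := Finset.card_erase_of_mem hjmem
            have h3 : 1 ≤ (Finset.univ.filter fun i => P i ≠ 0).card :=
              Finset.card_pos.mpr ⟨j, hjmem⟩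
            omega
          have hc1 : 1 ≤ c := by
            have h3 : 1 ≤ (Finset.univ.filter fun i => P i ≠ 0).card :=
              Finset.card_pos.mpr ⟨j, hjmem⟩
            omega
          refine IHc (c - 1) (by omega) P' b' hGen' hRel' i₀ (by rw [hP'i₀]; exact hi₀) ?_
            (by rw [hP'i₀]; exact hD) hcard
          intro i hi
          have hij : i ≠ j := fun h => hi (by rw [h, hP'j, hR0])
          have hPi : P' i = P i := Function.update_of_ne hij R P
          rw [hP'i₀, hPi]
          exact hmin i (hPi ▸ hi)
        · -- `R ≠ 0` : strictly smaller pivot degree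
          have hRd : R.natDegree < (P i₀).natDegree :=
            Polynomial.natDegree_lt_natDegree hRne (hR.resolve_left hRne)
          refine IHD (D - 1) (by omega) (n + 1) P' b' hGen' hRel' j
            (by rw [hP'j]; exact hRne) ?_ ?_ ?_
          · intro i hi
            rw [hP'j]
            by_cases hij : i = j
            · rw [hij, hP'j]
            · have hPi : P' i = P i := Function.update_of_ne hij R P
              rw [hPi]
              exact le_of_lt (lt_of_lt_of_le hRd (hmin i (hPi ▸ hi)))
          · rw [hP'j]; omega
          · exact le_trans (Finset.card_filter_le _ _) (by simp)
  have hne0 : (Finset.univ.filter fun i => P₀ i ≠ 0).Nonempty := by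
    obtain ⟨i, hi⟩ := Function.ne_iff.mp hP₀
    exact ⟨i, Finset.mem_filter.mpr ⟨Finset.mem_univ _, hi⟩⟩
  obtain ⟨i₀, hi₀mem, hi₀min⟩ :=
    Finset.exists_min_image _ (fun i => (P₀ i).natDegree) hne0
  have hi₀ : P₀ i₀ ≠ 0 := (Finset.mem_filter.mp hi₀mem).2
  exact Haux (P₀ i₀).natDegree (n + 1) P₀ b hGen hRel₀ i₀ hi₀
    (fun i hi => hi₀min i (Finset.mem_filter.mpr ⟨Finset.mem_univ _, hi⟩)) le_rfl
    (le_trans (Finset.card_filter_le _ _) (by simp))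

include hFadd hFsmul in
lemma key_rel {m : ℕ} (b : Fin m → V) (hIndep : Indep p F hFadd hFsmul m b)
    (l : (ℕ × Fin m) →₀ k)
    (hl : (l.sum fun ni a => a • F^[ni.1] (b ni.2)) ∈ TorSub p F hFadd hFsmul) :
    l = 0 := by
  classical
  set P : Fin m → k[X] :=
    fun i => ∑ nj ∈ l.support, if nj.2 = i then monomial nj.1 (l nj) else 0 with hP
  have h1 : ∀ i, act F (P i) (b i) =
      ∑ nj ∈ l.support, if nj.2 = i then (l nj) • F^[nj.1] (b i) else 0 := by
    intro i
    rw [hP, act_fsum]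
    refine Finset.sum_congr rfl fun nj _ => ?_
    by_cases h : nj.2 = i
    · rw [if_pos h, if_pos h, act_monomial]
    · rw [if_neg h, if_neg h, act_zero]
  have hsum : (∑ i, act F (P i) (b i)) = l.sum fun ni a => a • F^[ni.1] (b ni.2) := by
    rw [Finsupp.sum, Finset.sum_congr rfl fun i _ => h1 i, Finset.sum_comm]
    refine Finset.sum_congr rfl fun nj _ => ?_
    rw [Finset.sum_ite_eq Finset.univ nj.2 (fun i => (l nj) • F^[nj.1] (b i)),
      if_pos (Finset.mem_univ _)]
  have hP0 : P = 0 := hIndep P (by rw [hsum]; exact hl)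
  refine Finsupp.ext fun nj => ?_
  have hc : (P nj.2).coeff nj.1 = l nj := by
    rw [hP, Polynomial.finset_sum_coeff, Finset.sum_eq_single nj]
    · rw [if_pos rfl, coeff_monomial, if_pos rfl]
    · intro x _ hne
      by_cases h2 : x.2 = nj.2
      · rw [if_pos h2, coeff_monomial, if_neg (fun h1 => hne (Prod.ext h1 h2))]
      · rw [if_neg h2, coeff_zero]
    · intro h
      rw [Finsupp.notMem_support_iff.mp h, if_pos rfl, monomial_zero_right, coeff_zero]
  rw [hP0] at hc
  simpa using hc.symm

end Aux

/-- Let `k` be a perfect field of characteristic `p > 0` and `V` a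
`k`-vector space with a Frobenius-semilinear endomorphism `F`, finitely generated over the
twisted polynomial ring `k_σ[F]`.  Then the set `T` of torsion elements is an `F`-invariant
finite-dimensional `k`-subspace, and `V` is the internal direct sum of `T` and an
`F`-invariant subspace `W` which is free over `k_σ[F]`. -/
theorem stmt_5 (p : ℕ) [Fact p.Prime] (k : Type*) [Field k] [CharP k p] [PerfectRing k p]
    (V : Type*) [AddCommGroup V] [Module k V]
    (F : V → V)
    (hFadd : ∀ x y : V, F (x + y) = F x + F y)
    (hFsmul : ∀ (c : k) (v : V), F (c • v) = c ^ p • F v)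
    (hfg : ∃ S : Finset V,
      Submodule.span k (Set.range fun ns : ℕ × S => F^[ns.1] (ns.2 : V)) = ⊤) :
    ∃ T : Submodule k V,
      (T : Set V) = {v : V | ¬ LinearIndependent k fun n : ℕ => F^[n] v} ∧
      (∀ v ∈ T, F v ∈ T) ∧
      FiniteDimensional k T ∧
      ∃ W : Submodule k V,
        (∀ v ∈ W, F v ∈ W) ∧
        IsCompl T W ∧
        ∃ B : Finset V, (B : Set V) ⊆ (W : Set V) ∧
          LinearIndependent k (fun nb : ℕ × B => F^[nb.1] (nb.2 : V)) ∧
          Submodule.span k (Set.range fun nb : ℕ × B => F^[nb.1] (nb.2 : V)) = W := by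
  classical
  obtain ⟨S, hS⟩ := hfg
  set T := TorSub p F hFadd hFsmul with hTdef
  -- initial generating family
  set b₀ : Fin S.card → V := fun i => ((S.equivFin.symm i : S) : V) with hb₀
  have hrange₀ : (Set.range fun ni : ℕ × Fin S.card => F^[ni.1] (b₀ ni.2)) =
      (Set.range fun ns : ℕ × S => F^[ns.1] (ns.2 : V)) :=
    (Equiv.prodCongr (Equiv.refl ℕ) S.equivFin.symm).surjective.range_comp
      (fun ns : ℕ × S => F^[ns.1] (ns.2 : V))
  have hGen₀ : Gen p F hFadd hFsmul S.card b₀ := by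
    unfold Gen itSpan
    rw [hrange₀, hS, sup_top_eq]
  obtain ⟨m, b, hGen, hIndep⟩ := exists_indep_gen p F hFadd hFsmul S.card b₀ hGen₀
  set W := itSpan (k := k) F m b with hWdef
  have key := key_rel p F hFadd hFsmul b hIndep
  have hone : ∀ v : V, act F (1 : k[X]) v = v := fun v => by
    rw [← Polynomial.C_1, act_C, one_smul]
  -- injectivity of b
  have hinj : Function.Injective b := by
    intro i i' h
    by_contra hne
    set P : Fin m → Polynomial k :=
      fun j => if j = i then 1 else if j = i' then -1 else 0 with hPdef
    have hPi : P i = 1 := by rw [hPdef]; simp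
    have hPi' : P i' = -1 := by
      rw [hPdef]
      simp [Ne.symm hne]
    have hrel : (∑ j, act F (P j) (b j)) ∈ T := by
      have hsplit : (∑ j, act F (P j) (b j)) = b i - b i' := by
        rw [Finset.sum_eq_add_of_mem i i' (Finset.mem_univ _) (Finset.mem_univ _) hne
          (fun j _ hj => by rw [hPdef]; simp only [if_neg hj.1, if_neg hj.2]; exact act_zero F (b j))]
        rw [hPi, hPi', act_neg, hone, hone, sub_eq_add_neg]
      rw [hsplit, h, sub_self]
      exact T.zero_mem
    have hP0 := hIndep P hrel
    rw [hP0] at hPi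
    exact one_ne_zero hPi.symm
  -- the finite basis-carrier set
  set B : Finset V := Finset.image b Finset.univ with hB
  have he : Function.Bijective (fun i : Fin m => (⟨b i,
      Finset.mem_image_of_mem b (Finset.mem_univ i)⟩ : B)) := by
    constructor
    · intro i i' hii'
      exact hinj (congrArg Subtype.val hii')
    · rintro ⟨x, hx⟩
      obtain ⟨i, -, rfl⟩ := Finset.mem_image.mp hx
      exact ⟨i, rfl⟩
  set e : Fin m ≃ B := Equiv.ofBijective _ he with hedef
  set eprod : ℕ × Fin m ≃ ℕ × B := Equiv.prodCongr (Equiv.refl ℕ) e with heprod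
  have hcompB : (fun nb : ℕ × B => F^[nb.1] (nb.2 : V)) ∘ eprod =
      fun ni : ℕ × Fin m => F^[ni.1] (b ni.2) := rfl
  have hrangeB : Set.range (fun nb : ℕ × B => F^[nb.1] (nb.2 : V)) =
      Set.range (fun ni : ℕ × Fin m => F^[ni.1] (b ni.2)) := by
    rw [← hcompB]
    exact (eprod.surjective.range_comp _).symm
  have hspanB : Submodule.span k (Set.range fun nb : ℕ × B => F^[nb.1] (nb.2 : V)) = W := by
    rw [hrangeB]; rfl
  -- complementarity
  have hdisj : Disjoint T W := by
    rw [Submodule.disjoint_def]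
    intro x hxT hxW
    obtain ⟨l, hl⟩ := Finsupp.mem_span_range_iff_exists_finsupp.mp hxW
    have hl0 : l = 0 := key l (by rw [hl]; exact hxT)
    rw [← hl, hl0, Finsupp.sum_zero_index]
  have hcodis : Codisjoint T W := codisjoint_iff.mpr hGen
  have hcompl : IsCompl T W := ⟨hdisj, hcodis⟩
  -- linear independence
  have hliFin : LinearIndependent k (fun ni : ℕ × Fin m => F^[ni.1] (b ni.2)) := by
    rw [linearIndependent_iff]
    intro l hl
    refine key l ?_
    have : (l.sum fun ni a => a • F^[ni.1] (b ni.2)) = 0 := by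
      rw [← hl, Finsupp.linearCombination_apply]
    rw [this]
    exact T.zero_mem
  have hliB : LinearIndependent k (fun nb : ℕ × B => F^[nb.1] (nb.2 : V)) :=
    (linearIndependent_equiv eprod).mp hliFin
  -- finite-dimensionality of T
  have hfinT : FiniteDimensional k T := by
    set π := Submodule.linearProjOfIsCompl T W hcompl with hπ
    set πV : V →ₗ[k] V := T.subtype.comp π with hπV
    have hπmem : ∀ v : V, πV v ∈ T := fun v => (π v).2
    have hπT : ∀ t, t ∈ T → πV t = t := fun t ht =>
      congrArg Subtype.val (Submodule.linearProjOfIsCompl_apply_left hcompl ⟨t, ht⟩)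
    have hπW : ∀ w ∈ W, πV w = 0 := fun w hw =>
      congrArg Subtype.val (Submodule.linearProjOfIsCompl_apply_right' hcompl hw)
    have hπF : ∀ v : V, πV (F v) = F (πV v) := by
      intro v
      have hv : v ∈ T ⊔ W := by rw [show T ⊔ W = ⊤ from hGen]; trivial
      obtain ⟨t, ht, w, hw, rfl⟩ := Submodule.mem_sup.mp hv
      have h1 : πV (t + w) = t := by
        rw [map_add, hπT t ht, hπW w hw, add_zero]
      have h2 : πV (F (t + w)) = F t := by
        rw [hFadd, map_add, hπT _ (TorSub_Fstable p F hFadd hFsmul ht),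
          hπW _ (itSpan_Fstable p F hFadd hFsmul m b w hw), add_zero]
      rw [h1, h2]
    have hπiter : ∀ (s : V) (n : ℕ), πV (F^[n] s) = F^[n] (πV s) := by
      intro s n
      induction n with
      | zero => rfl
      | succ n ih =>
          rw [Function.iterate_succ_apply', Function.iterate_succ_apply', hπF, ih]
    haveI hUof : ∀ s : S, FiniteDimensional k
        (Submodule.span k (Set.range fun n : ℕ => F^[n] (πV (s : V)))) := by
      intro s
      obtain ⟨U0, hU0fin, hU0⟩ := hπmem (s : V)
      haveI := hU0fin
      exact Submodule.finiteDimensional_of_le (Submodule.span_le.mpr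
        (by rintro y ⟨n, rfl⟩; exact hU0 n))
    set U : Submodule k V :=
      ⨆ s : S, Submodule.span k (Set.range fun n : ℕ => F^[n] (πV (s : V))) with hU
    haveI hUfin : FiniteDimensional k U := by
      infer_instance
    refine Submodule.finiteDimensional_of_le (S₂ := U) ?_
    intro t ht
    have h3 : t ∈ Submodule.map πV ⊤ := ⟨t, trivial, hπT t ht⟩
    rw [← hS, Submodule.map_span] at h3
    refine Submodule.span_le.mpr ?_ h3
    rintro y ⟨x, ⟨⟨n, s⟩, rfl⟩, rfl⟩
    rw [hπiter (s : V) n]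
    exact (le_iSup (fun s : S =>
      Submodule.span k (Set.range fun n : ℕ => F^[n] (πV (s : V)))) s)
      (Submodule.subset_span ⟨n, rfl⟩)
  refine ⟨T, Set.ext fun v => tor_iff p F hFadd hFsmul v,
    fun v hv => TorSub_Fstable p F hFadd hFsmul hv, hfinT,
    W, fun w hw => itSpan_Fstable p F hFadd hFsmul m b w hw, hcompl,
    B, ?_, hliB, hspanB⟩
  rintro x hx
  obtain ⟨i, -, rfl⟩ := Finset.mem_image.mp hx
  exact Submodule.subset_span ⟨(0, i), rfl⟩
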